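/- Let Y be a hereditarily unicoherent Suslinian continuum with metric d. Then there exists ε > 0 such that every two ε-dense subcontinua of Y intersect. -/

import Mathlib

open Set Metric Topology

section Aux

variable {Y : Type*} [TopologicalSpace Y] [CompactSpace Y] [T2Space Y]

/-- Boundary bumping: in a compact connected T2 space, the connected component of `y` in a
closed proper subset `F` meets the frontier of `F`. -/
lemma exists_mem_frontier_of_connectedComponentIn [PreconnectedSpace Y]
    {F : Set Y} (hF : IsClosed F) {q : Y} (hq : q ∉ F) {y : Y} (hy : y ∈ F) :
    ∃ z ∈ connectedComponentIn F y, z ∈ frontier F := by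
  by_contra h
  push_neg at h
  have hCF : connectedComponentIn F y ⊆ F := connectedComponentIn_subset F y
  have hCint : connectedComponentIn F y ⊆ interior F := by
    intro x hx
    by_contra hxint
    exact h x hx ⟨subset_closure (hCF hx), hxint⟩
  haveI : CompactSpace F := isCompact_iff_compactSpace.mp hF.isCompact
  set y' : F := ⟨y, hy⟩ with hy'
  have himg : connectedComponentIn F y = (↑) '' connectedComponent y' :=
    connectedComponentIn_eq_image hy
  set W : Set F := (↑) ⁻¹' (interior F) with hWdef
  have hWopen : IsOpen W := isOpen_interior.preimage continuous_subtype_val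
  have hCW : connectedComponent y' ⊆ W := by
    intro z hz
    have : (z : Y) ∈ connectedComponentIn F y := himg ▸ mem_image_of_mem _ hz
    exact hCint this
  obtain ⟨Z, hZclopen, hyZ, hZW⟩ : ∃ Z : Set F, IsClopen Z ∧ y' ∈ Z ∧ Z ⊆ W := by
    classical
    have hrepr := connectedComponent_eq_iInter_isClopen y'
    have hcov : Wᶜ ⊆ ⋃ i : { s : Set F // IsClopen s ∧ y' ∈ s }, (↑i : Set F)ᶜ := by
      intro x hx
      have hxC : x ∉ connectedComponent y' := fun hxc => hx (hCW hxc)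
      rw [hrepr] at hxC
      simp only [mem_iInter, not_forall] at hxC
      obtain ⟨i, hi⟩ := hxC
      exact mem_iUnion.mpr ⟨i, hi⟩
    have hcomp : IsCompact Wᶜ := hWopen.isClosed_compl.isCompact
    obtain ⟨t, ht⟩ := hcomp.elim_finite_subcover
      (fun i : { s : Set F // IsClopen s ∧ y' ∈ s } => (↑i : Set F)ᶜ)
      (fun i => i.2.1.1.isOpen_compl) hcov
    refine ⟨⋂ i ∈ t, (i : Set F), isClopen_biInter_finset (fun i _ => i.2.1),
      mem_iInter₂.mpr fun i _ => i.2.2, ?_⟩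
    intro x hx
    by_contra hxW
    have hxt := ht hxW
    simp only [mem_iUnion] at hxt
    obtain ⟨i, hit, hxi⟩ := hxt
    exact hxi (mem_iInter₂.mp hx i hit)
  set Zy : Set Y := (↑) '' Z with hZydef
  have hZyF : Zy ⊆ F := by rintro _ ⟨z, _, rfl⟩; exact z.2
  have hclosed : IsClosed Zy :=
    ((hZclopen.isClosed.isCompact).image continuous_subtype_val).isClosed
  obtain ⟨O, hOopen, hOZ⟩ := isOpen_induced_iff.mp hZclopen.isOpen
  have hZyeq : Zy = O ∩ interior F := by
    ext w
    constructor
    · rintro ⟨z, hz, rfl⟩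
      refine ⟨?_, hZW hz⟩
      rw [← hOZ] at hz; exact hz
    · rintro ⟨hwO, hwint⟩
      refine ⟨⟨w, interior_subset hwint⟩, ?_, rfl⟩
      rw [← hOZ]; exact hwO
  have hopen : IsOpen Zy := hZyeq ▸ hOopen.inter isOpen_interior
  rcases isClopen_iff.mp ⟨hclosed, hopen⟩ with h0 | h1
  · have : y ∈ Zy := ⟨y', hyZ, rfl⟩
    rw [h0] at this; exact this
  · exact hq (hZyF (h1 ▸ mem_univ q))

lemma isCompact_connectedComponentIn {F : Set Y} (hF : IsClosed F) {y : Y} (hy : y ∈ F) :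
    IsCompact (connectedComponentIn F y) := by
  haveI : CompactSpace F := isCompact_iff_compactSpace.mp hF.isCompact
  rw [connectedComponentIn_eq_image hy]
  exact isClosed_connectedComponent.isCompact.image continuous_subtype_val

end Aux

section Piece

variable {Y : Type*} [MetricSpace Y] [CompactSpace Y] [ConnectedSpace Y]

/-- Near any point `p`, provided some point is farther than `r`, there is a subcontinuum inside
the closed `r`-ball around `p` with nonempty interior. -/
lemma exists_piece
    (hSus : ∀ C : Set (Set Y),
      (∀ S ∈ C, IsCompact S ∧ IsConnected S ∧ S.Nontrivial) →
      C.Pairwise Disjoint → C.Countable)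
    {p q : Y} {r : ℝ} (hr : 0 < r) (hq : r < dist q p) :
    ∃ Q : Set Y, IsCompact Q ∧ IsConnected Q ∧ Q.Nontrivial ∧ Q ⊆ closedBall p r ∧
      (interior Q).Nonempty := by
  set F : Set Y := closedBall p r with hFdef
  have hFclosed : IsClosed F := isClosed_closedBall
  have hqF : q ∉ F := by
    simp only [hFdef, mem_closedBall, not_le]
    exact hq
  have hball_sub : ball p r ⊆ F := ball_subset_closedBall
  have hball_int : ball p r ⊆ interior F := isOpen_ball.subset_interior_iff.mpr hball_sub
  -- properties of components
  have hprops : ∀ y ∈ ball p r, IsCompact (connectedComponentIn F y) ∧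
      IsConnected (connectedComponentIn F y) ∧ (connectedComponentIn F y).Nontrivial := by
    intro y hy
    have hyF : y ∈ F := hball_sub hy
    refine ⟨isCompact_connectedComponentIn hFclosed hyF,
      isConnected_connectedComponentIn_iff.mpr hyF, ?_⟩
    obtain ⟨z, hzC, hzfr⟩ :=
      exists_mem_frontier_of_connectedComponentIn hFclosed hqF hyF
    refine ⟨y, mem_connectedComponentIn hyF, z, hzC, ?_⟩
    intro hyz
    subst hyz
    exact hzfr.2 (hball_int hy)
  set 𝒞 : Set (Set Y) := (fun y => connectedComponentIn F y) '' (ball p r) with h𝒞def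
  have hdisj : 𝒞.Pairwise Disjoint := by
    rintro _ ⟨y₁, hy₁, rfl⟩ _ ⟨y₂, hy₂, rfl⟩ hne
    refine disjoint_left.mpr fun z hz₁ hz₂ => hne ?_
    show connectedComponentIn F y₁ = connectedComponentIn F y₂
    rw [connectedComponentIn_eq hz₁, connectedComponentIn_eq hz₂]
  have hcount : 𝒞.Countable := by
    refine hSus 𝒞 ?_ hdisj
    rintro S ⟨y, hy, rfl⟩
    exact hprops y hy
  have hne𝒞 : 𝒞.Nonempty := ⟨_, ⟨p, mem_ball_self hr, rfl⟩⟩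
  obtain ⟨f, hf⟩ := hcount.exists_eq_range hne𝒞
  have hfclosed : ∀ n, IsClosed (f n) := by
    intro n
    have : f n ∈ 𝒞 := hf ▸ mem_range_self n
    obtain ⟨y, hy, hfn⟩ := this
    rw [← hfn]
    exact (hprops y hy).1.isClosed
  -- Baire: some f n has nonempty interior
  have hexn : ∃ n, (interior (f n)).Nonempty := by
    by_contra hno
    push_neg at hno
    have hdense : ∀ n, Dense (f n)ᶜ := fun n =>
      interior_eq_empty_iff_dense_compl.mp (hno n)
    haveI : CompleteSpace Y := complete_of_compact
    have hD : Dense (⋂ n, (f n)ᶜ) :=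
      dense_iInter_of_isOpen (fun n => (hfclosed n).isOpen_compl) hdense
    obtain ⟨z, hzI, hzball⟩ := hD.exists_mem_open isOpen_ball ⟨p, mem_ball_self hr⟩
    have hzC : connectedComponentIn F z ∈ 𝒞 := ⟨z, hzball, rfl⟩
    rw [hf] at hzC
    obtain ⟨m, hm⟩ := hzC
    have : z ∈ f m := hm ▸ mem_connectedComponentIn (hball_sub hzball)
    exact (mem_iInter.mp hzI m) this
  obtain ⟨n, hn⟩ := hexn
  have hfn𝒞 : f n ∈ 𝒞 := hf ▸ mem_range_self n
  obtain ⟨y, hy, hfn⟩ := hfn𝒞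
  rw [← hfn] at hn
  obtain ⟨hc, hconn, hnt⟩ := hprops y hy
  exact ⟨connectedComponentIn F y, hc, hconn, hnt, connectedComponentIn_subset F y, hn⟩

end Piece

/-- Let `Y` be a hereditarily unicoherent Suslinian continuum with metric `d`.
Then there exists `ε > 0` such that every two `ε`-dense subcontinua of `Y` intersect.

Here a subcontinuum of `Y` is a compact connected subset with more than one point; `Y` is
hereditarily unicoherent if the intersection of every two intersecting subcontinua is connected;
`Y` is Suslinian if every pairwise disjoint collection of subcontinua is countable; a set is
`ε`-dense if it meets every open ball of radius `ε`. -/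
theorem stmt_0 {Y : Type*} [MetricSpace Y] [CompactSpace Y] [ConnectedSpace Y] [Nontrivial Y]
    (hHU : ∀ H K : Set Y,
      IsCompact H → IsConnected H → H.Nontrivial →
      IsCompact K → IsConnected K → K.Nontrivial →
      (H ∩ K).Nonempty → IsConnected (H ∩ K))
    (hSus : ∀ C : Set (Set Y),
      (∀ S ∈ C, IsCompact S ∧ IsConnected S ∧ S.Nontrivial) →
      C.Pairwise Disjoint → C.Countable) :
    ∃ ε > (0 : ℝ), ∀ E₀ E₁ : Set Y,
      IsCompact E₀ → IsConnected E₀ → E₀.Nontrivial →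
      IsCompact E₁ → IsConnected E₁ → E₁.Nontrivial →
      (∀ y : Y, ∃ e ∈ E₀, dist e y < ε) →
      (∀ y : Y, ∃ e ∈ E₁, dist e y < ε) →
      (E₀ ∩ E₁).Nonempty := by
  obtain ⟨p, q, hpq⟩ := exists_pair_ne Y
  have hd : 0 < dist p q := dist_pos.mpr hpq
  set r : ℝ := dist p q / 3 with hrdef
  have hr : 0 < r := by positivity
  obtain ⟨Qp, hQpc, hQpconn, hQpnt, hQpsub, hQpint⟩ :=
    exists_piece hSus hr (q := q) (by rw [dist_comm]; linarith)
  obtain ⟨Qq, hQqc, hQqconn, hQqnt, hQqsub, hQqint⟩ :=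
    exists_piece hSus hr (q := p) (by linarith)
  obtain ⟨u, hu⟩ := hQpint
  obtain ⟨σ₁, hσ₁, hball₁⟩ := Metric.isOpen_iff.mp isOpen_interior u hu
  have hball₁' : ball u σ₁ ⊆ Qp := hball₁.trans interior_subset
  obtain ⟨v, hv⟩ := hQqint
  obtain ⟨σ₂, hσ₂, hball₂⟩ := Metric.isOpen_iff.mp isOpen_interior v hv
  have hball₂' : ball v σ₂ ⊆ Qq := hball₂.trans interior_subset
  refine ⟨min σ₁ σ₂, lt_min hσ₁ hσ₂, ?_⟩
  intro E₀ E₁ hE₀c hE₀conn hE₀nt hE₁c hE₁conn hE₁nt hd₀ hd₁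
  by_contra hneq
  rw [not_nonempty_iff_eq_empty] at hneq
  obtain ⟨a, haE, hau⟩ := hd₀ u
  have haQ : a ∈ Qp := hball₁' (mem_ball.mpr (lt_of_lt_of_le hau (min_le_left _ _)))
  obtain ⟨b, hbE, hbu⟩ := hd₁ u
  have hbQ : b ∈ Qp := hball₁' (mem_ball.mpr (lt_of_lt_of_le hbu (min_le_left _ _)))
  obtain ⟨a', haE', hav⟩ := hd₀ v
  have haQ' : a' ∈ Qq := hball₂' (mem_ball.mpr (lt_of_lt_of_le hav (min_le_right _ _)))
  obtain ⟨b', hbE', hbv⟩ := hd₁ v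
  have hbQ' : b' ∈ Qq := hball₂' (mem_ball.mpr (lt_of_lt_of_le hbv (min_le_right _ _)))
  set H : Set Y := E₀ ∪ Qp with hHdef
  set K : Set Y := E₁ ∪ Qq with hKdef
  have hHc : IsCompact H := hE₀c.union hQpc
  have hHconn : IsConnected H := hE₀conn.union ⟨a, haE, haQ⟩ hQpconn
  have hHnt : H.Nontrivial := hE₀nt.mono subset_union_left
  have hKc : IsCompact K := hE₁c.union hQqc
  have hKconn : IsConnected K := hE₁conn.union ⟨b', hbE', hbQ'⟩ hQqconn
  have hKnt : K.Nontrivial := hE₁nt.mono subset_union_left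
  have hbH : b ∈ H := Or.inr hbQ
  have hbK : b ∈ K := Or.inl hbE
  have haH' : a' ∈ H := Or.inl haE'
  have haK' : a' ∈ K := Or.inr haQ'
  have hconn : IsConnected (H ∩ K) :=
    hHU H K hHc hHconn hHnt hKc hKconn hKnt ⟨b, hbH, hbK⟩
  -- H ∩ K is contained in the union of the two disjoint closed balls
  have hsub : H ∩ K ⊆ closedBall p r ∪ closedBall q r := by
    rintro x ⟨hxH, hxK⟩
    rcases hxH with hx0 | hxQp
    · rcases hxK with hx1 | hxQq
      · exact absurd (show x ∈ (∅ : Set Y) from hneq ▸ (⟨hx0, hx1⟩ : x ∈ E₀ ∩ E₁)) (notMem_empty x)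
      · exact Or.inr (hQqsub hxQq)
    · exact Or.inl (hQpsub hxQp)
  have hballs : ∀ z, z ∈ closedBall p r → z ∈ closedBall q r → False := by
    intro z hz1 hz2
    have h1 : dist z p ≤ r := mem_closedBall.mp hz1
    have h2 : dist z q ≤ r := mem_closedBall.mp hz2
    have h3 : dist p q ≤ dist p z + dist z q := dist_triangle p z q
    rw [dist_comm p z] at h3
    rw [hrdef] at h1 h2
    linarith
  -- contradiction with connectedness
  have hpre := hconn.isPreconnected
  have hsep := hpre (closedBall q r)ᶜ (closedBall p r)ᶜ
    isClosed_closedBall.isOpen_compl isClosed_closedBall.isOpen_compl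
    (by
      intro x hx
      rcases hsub hx with hxp | hxq
      · exact Or.inl fun hq' => hballs x hxp hq'
      · exact Or.inr fun hp' => hballs x hp' hxq)
    ⟨b, ⟨hbH, hbK⟩, fun hq' => hballs b (hQpsub hbQ) hq'⟩
    ⟨a', ⟨haH', haK'⟩, fun hp' => hballs a' hp' (hQqsub haQ')⟩
  obtain ⟨z, hz, hz1, hz2⟩ := hsep
  rcases hsub hz with hzp | hzq
  · exact hz2 hzp
  · exact hz1 hzq
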